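/- Let G be a group, G = G₀ ≥ G₁ ≥ ⋯ ≥ Gₙ = {1} a chain with each Gᵢ₊₁ normal in Gᵢ, and let C ≤ G. Suppose for each i < n, either the quotient Gᵢ/Gᵢ₊₁ is abelian, or every element of C normalizes both Gᵢ and Gᵢ₊₁ and acts trivially by conjugation on Gᵢ/Gᵢ₊₁ (i.e., [C, Gᵢ] ⊆ Gᵢ₊₁). Then C is solvable. -/

import Mathlib

theorem solvable_of_chain_abelian_or_central {G : Type*} [Group G] (n : ℕ)
    (Gs : ℕ → Subgroup G)
    (h0 : Gs 0 = ⊤) (hn : Gs n = ⊥)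
    (hchain : ∀ i < n, Gs (i + 1) ≤ Gs i)
    (hnormal : ∀ i < n, ∀ g ∈ Gs i, ∀ x ∈ Gs (i + 1), g * x * g⁻¹ ∈ Gs (i + 1))
    (C : Subgroup G)
    (hcases : ∀ i < n, ⁅Gs i, Gs i⁆ ≤ Gs (i + 1) ∨
      ((∀ c ∈ C, ∀ x ∈ Gs i, c * x * c⁻¹ ∈ Gs i) ∧
       (∀ c ∈ C, ∀ x ∈ Gs (i + 1), c * x * c⁻¹ ∈ Gs (i + 1)) ∧
       ⁅C, Gs i⁆ ≤ Gs (i + 1))) :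
    IsSolvable C := by
  have key : ∀ k, k ≤ n → (derivedSeries C k).map C.subtype ≤ Gs k := by
    intro k
    induction k with
    | zero => intro _; rw [h0]; exact le_top
    | succ k ih =>
      intro hk
      have hk' : k < n := lt_of_lt_of_le (Nat.lt_succ_self k) hk
      have ihk := ih (le_of_lt hk')
      have hC : (derivedSeries C k).map C.subtype ≤ C := by
        simpa using Subgroup.map_subtype_le (derivedSeries C k)
      rw [derivedSeries_succ, Subgroup.map_commutator]
      rcases hcases k hk' with h | ⟨_, _, h⟩
      · exact le_trans (Subgroup.commutator_mono ihk ihk) h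
      · exact le_trans (Subgroup.commutator_mono hC ihk) h
  rw [show IsSolvable C ↔ Group.IsSolvable C from Iff.rfl, isSolvable_def]
  refine ⟨n, ?_⟩
  have h := key n le_rfl
  rw [hn, le_bot_iff] at h
  have hinj : Function.Injective C.subtype := C.subtype_injective
  exact Subgroup.map_injective hinj (by simpa using h)
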